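/- The functors U_i = - ⊗_{Q_m} B_i with B_i = P_i ⊗ _iP⟨-1⟩ on graded projective right Q_m-modules satisfy the categorified Temperley-Lieb relations: U_i ∘ U_i ≅ U_i⟨-1⟩ ⊕ U_i⟨+1⟩, U_i ∘ U_{i±1} ∘ U_i ≅ U_i (when all indices lie in {1,...,m}), and U_i ∘ U_{i'} ≅ 0 when |i - i'| > 1. -/

import Mathlib

/-- Generators of the Khovanov–Seidel quiver with vertices `0, …, m`:
idempotents `e i`, arrows `u i : i → i+1` (for `0 ≤ i ≤ m-1`, encoded by
`i : Fin m`) and arrows `d i` which encode `d_{i+1} : i+1 → i` (for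
`i : Fin m`). -/
inductive KSGen (m : ℕ) : Type
  | e : Fin (m + 1) → KSGen m
  | u : Fin m → KSGen m
  | d : Fin m → KSGen m

namespace KS

variable (K : Type*) [Field K] (m : ℕ)

open FreeAlgebra

/-- The quiver (path-algebra) relations together with the Khovanov–Seidel
relations `u_i u_{i-1} = 0`, `d_i d_{i+1} = 0`, `d_{i+1} u_i = u_{i-1} d_i` and
the dead-end relation `d_1 u_0 = 0`.  Paths compose right-to-left. -/
inductive Rel : FreeAlgebra K (KSGen m) → FreeAlgebra K (KSGen m) → Prop
  | e_mul (i j : Fin (m + 1)) :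
      Rel (ι K (.e i) * ι K (.e j)) (if i = j then ι K (.e i) else 0)
  | one : Rel (∑ i : Fin (m + 1), ι K (KSGen.e i)) 1
  | u_src (i : Fin m) : Rel (ι K (.u i) * ι K (.e i.castSucc)) (ι K (.u i))
  | u_src' (i : Fin m) (j : Fin (m + 1)) (h : j ≠ i.castSucc) :
      Rel (ι K (.u i) * ι K (.e j)) 0
  | u_tgt (i : Fin m) : Rel (ι K (.e i.succ) * ι K (.u i)) (ι K (.u i))
  | u_tgt' (i : Fin m) (j : Fin (m + 1)) (h : j ≠ i.succ) :
      Rel (ι K (.e j) * ι K (.u i)) 0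
  | d_src (i : Fin m) : Rel (ι K (.d i) * ι K (.e i.succ)) (ι K (.d i))
  | d_src' (i : Fin m) (j : Fin (m + 1)) (h : j ≠ i.succ) :
      Rel (ι K (.d i) * ι K (.e j)) 0
  | d_tgt (i : Fin m) : Rel (ι K (.e i.castSucc) * ι K (.d i)) (ι K (.d i))
  | d_tgt' (i : Fin m) (j : Fin (m + 1)) (h : j ≠ i.castSucc) :
      Rel (ι K (.e j) * ι K (.d i)) 0
  | uu (i j : Fin m) (h : (i : ℕ) = (j : ℕ) + 1) :
      Rel (ι K (.u i) * ι K (.u j)) 0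
  | dd (i j : Fin m) (h : (i : ℕ) = (j : ℕ) + 1) :
      Rel (ι K (.d j) * ι K (.d i)) 0
  | du (i j : Fin m) (h : (i : ℕ) = (j : ℕ) + 1) :
      Rel (ι K (.d i) * ι K (.u i)) (ι K (.u j) * ι K (.d j))
  | deadend (i : Fin m) (h : (i : ℕ) = 0) : Rel (ι K (.d i) * ι K (.u i)) 0

/-- The Khovanov–Seidel quiver algebra `Q_m`. -/
abbrev Qm := RingQuot (Rel K m)

/-- The idempotent (length-zero path) at vertex `i`. -/
noncomputable def eQ (i : Fin (m + 1)) : Qm K m :=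
  RingQuot.mkAlgHom K (Rel K m) (ι K (.e i))

/-- The arrow `u_i : i → i+1` (for `i : Fin m`). -/
noncomputable def uQ (i : Fin m) : Qm K m :=
  RingQuot.mkAlgHom K (Rel K m) (ι K (.u i))

/-- The arrow `d_{i+1} : i+1 → i` (for `i : Fin m`). -/
noncomputable def dQ (i : Fin m) : Qm K m :=
  RingQuot.mkAlgHom K (Rel K m) (ι K (.d i))

/-- The loop `ε_{i+1} = u_i d_{i+1}` at the vertex `i+1` (for `i : Fin m`). -/
noncomputable def epsQ (i : Fin m) : Qm K m := uQ K m i * dQ K m i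

/-- An element is an arrow if it is one of the `u_i` or `d_i`. -/
def IsArrow (x : Qm K m) : Prop :=
  (∃ i, x = uQ K m i) ∨ (∃ i, x = dQ K m i)

/-- The degree-`n` component of the path-length grading on `Q_m`: the span of
paths of length `n`, i.e. of products `e_i · a_n ⋯ a_1` of an idempotent with
`n` arrows. -/
noncomputable def grade (n : ℕ) : Submodule K (Qm K m) :=
  Submodule.span K
    {x | ∃ (i : Fin (m + 1)) (L : List (Qm K m)),
      (∀ a ∈ L, IsArrow K m a) ∧ L.length = n ∧ x = eQ K m i * L.prod}

/-- The path-length grading extended to integer degrees (zero in negative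
degrees). -/
noncomputable def gradeZ (n : ℤ) : Submodule K (Qm K m) :=
  if 0 ≤ n then grade K m n.toNat else ⊥

end KS

namespace KS

variable (K : Type*) [Field K] (m : ℕ)

open TensorProduct

/-- The right ideal `ᵢP = e_i Q_m`, as a `K`-subspace. -/
noncomputable def rightIdeal (i : Fin (m + 1)) : Submodule K (Qm K m) :=
  LinearMap.range (LinearMap.mulLeft K (eQ K m i))

/-- The left ideal `P_i = Q_m e_i`, as a `K`-subspace. -/
noncomputable def leftIdeal (i : Fin (m + 1)) : Submodule K (Qm K m) :=
  LinearMap.range (LinearMap.mulRight K (eQ K m i))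

/-- The `K`-subspace `e_{i'} Q_m e_i`. -/
noncomputable def homSpace (i' i : Fin (m + 1)) : Submodule K (Qm K m) :=
  LinearMap.range
    ((LinearMap.mulLeft K (eQ K m i')).comp (LinearMap.mulRight K (eQ K m i)))

/-- Right multiplication by `q` on `e_i Q_m` (the right module structure). -/
noncomputable def rmulRight (i : Fin (m + 1)) (q : Qm K m) :
    rightIdeal K m i →ₗ[K] rightIdeal K m i where
  toFun x := ⟨(x : Qm K m) * q, by
    obtain ⟨x, hx⟩ := x
    obtain ⟨y, rfl⟩ := hx
    exact ⟨y * q, by simp [LinearMap.mulLeft_apply, mul_assoc]⟩⟩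
  map_add' x y := by ext; simp [add_mul]
  map_smul' c x := by ext; simp [smul_mul_assoc]

/-- Left multiplication by `q` on `Q_m e_i` (the left module structure). -/
noncomputable def lmulLeft (i : Fin (m + 1)) (q : Qm K m) :
    leftIdeal K m i →ₗ[K] leftIdeal K m i where
  toFun x := ⟨q * (x : Qm K m), by
    obtain ⟨x, hx⟩ := x
    obtain ⟨y, rfl⟩ := hx
    exact ⟨q * y, by simp [LinearMap.mulRight_apply, mul_assoc]⟩⟩
  map_add' x y := by ext; simp [mul_add]
  map_smul' c x := by ext; simp [mul_smul_comm]

/-- The Khovanov–Seidel bimodule `B_i = P_i ⊗_K ᵢP⟨-1⟩`, as a `K`-space (the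
grading shift is recorded in the degree conditions of the theorem below). -/
noncomputable abbrev Bspace (i : Fin (m + 1)) :=
  (leftIdeal K m i) ⊗[K] (rightIdeal K m i)

/-- The `K`-space `B_i ⊗_{Q_m} B_j ≅ Q_m e_i ⊗_K (e_i Q_m e_j) ⊗_K e_j Q_m`. -/
noncomputable abbrev B2space (i j : Fin (m + 1)) :=
  (leftIdeal K m i) ⊗[K] ((homSpace K m i j) ⊗[K] (rightIdeal K m j))

/-- The `K`-space
`B_i ⊗_{Q_m} B_j ⊗_{Q_m} B_i ≅ Q_m e_i ⊗ (e_i Q_m e_j) ⊗ (e_j Q_m e_i) ⊗ e_i Q_m`. -/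
noncomputable abbrev B3space (i j : Fin (m + 1)) :=
  (leftIdeal K m i) ⊗[K]
    ((homSpace K m i j) ⊗[K] ((homSpace K m j i) ⊗[K] (rightIdeal K m i)))

/-- Left `Q_m`-action on `B_i`. -/
noncomputable def lB (i : Fin (m + 1)) (q : Qm K m) :
    Bspace K m i →ₗ[K] Bspace K m i :=
  LinearMap.rTensor _ (lmulLeft K m i q)

/-- Right `Q_m`-action on `B_i`. -/
noncomputable def rB (i : Fin (m + 1)) (q : Qm K m) :
    Bspace K m i →ₗ[K] Bspace K m i :=
  LinearMap.lTensor _ (rmulRight K m i q)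

/-- Left `Q_m`-action on `B_i ⊗_{Q_m} B_j`. -/
noncomputable def lB2 (i j : Fin (m + 1)) (q : Qm K m) :
    B2space K m i j →ₗ[K] B2space K m i j :=
  LinearMap.rTensor _ (lmulLeft K m i q)

/-- Right `Q_m`-action on `B_i ⊗_{Q_m} B_j`. -/
noncomputable def rB2 (i j : Fin (m + 1)) (q : Qm K m) :
    B2space K m i j →ₗ[K] B2space K m i j :=
  LinearMap.lTensor _ (LinearMap.lTensor _ (rmulRight K m j q))

/-- Left `Q_m`-action on `B_i ⊗_{Q_m} B_j ⊗_{Q_m} B_i`. -/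
noncomputable def lB3 (i j : Fin (m + 1)) (q : Qm K m) :
    B3space K m i j →ₗ[K] B3space K m i j :=
  LinearMap.rTensor _ (lmulLeft K m i q)

/-- Right `Q_m`-action on `B_i ⊗_{Q_m} B_j ⊗_{Q_m} B_i`. -/
noncomputable def rB3 (i j : Fin (m + 1)) (q : Qm K m) :
    B3space K m i j →ₗ[K] B3space K m i j :=
  LinearMap.lTensor _ (LinearMap.lTensor _ (LinearMap.lTensor _ (rmulRight K m i q)))

/-- The degree-`n` part of the (underlying, unshifted) path-length grading of
`B_i`: the span of `p ⊗ x` with `p, x` homogeneous of total degree `n`. -/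
noncomputable def Bgrade (i : Fin (m + 1)) (n : ℤ) : Submodule K (Bspace K m i) :=
  Submodule.span K
    {z | ∃ (a b : ℕ) (p : leftIdeal K m i) (x : rightIdeal K m i),
      (p : Qm K m) ∈ grade K m a ∧ (x : Qm K m) ∈ grade K m b ∧
      (a : ℤ) + b = n ∧ z = p ⊗ₜ[K] x}

end KS

namespace KSP
open KS FreeAlgebra

/-- Basis labels for the Khovanov–Seidel algebra: idempotents `e i`, arrows
`u i`, `d i`, and loops `eps i = u i * d i` at vertex `i+1`. -/
inductive PB (m : ℕ) : Type
  | e : Fin (m + 1) → PB m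
  | u : Fin m → PB m
  | d : Fin m → PB m
  | eps : Fin m → PB m
deriving DecidableEq

/-- path length -/
def deg {m : ℕ} : PB m → ℕ
  | .e _ => 0
  | .u _ => 1
  | .d _ => 1
  | .eps _ => 2

/-- target vertex -/
def tgt {m : ℕ} : PB m → Fin (m + 1)
  | .e i => i
  | .u i => i.succ
  | .d i => i.castSucc
  | .eps i => i.succ

/-- `pre g b = some b'` iff `g * b' = b` in the path basis (left mult transpose). -/
def pre {m : ℕ} : KSGen m → PB m → Option (PB m)
  | .e i, b => if tgt b = i then some b else none
  | .u i, .u j => if j = i then some (.e i.castSucc) else none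
  | .u i, .eps j => if j = i then some (.d i) else none
  | .u _, _ => none
  | .d i, .d j => if j = i then some (.e i.succ) else none
  | .d i, .eps j => if (i : ℕ) = (j : ℕ) + 1 then some (.u i) else none
  | .d _, _ => none

lemma pre_deg {m : ℕ} (g : KSGen m) (b b' : PB m) (h : pre g b = some b') :
    deg b = deg b' + (match g with | .e _ => 0 | _ => 1) := by
  cases g <;> cases b <;> simp [pre, tgt] at h <;>
    first
      | (obtain ⟨h1, rfl⟩ := h; rfl)
      | (obtain ⟨h1, h2⟩ := h; subst h2; rfl)
      | (obtain ⟨_, h2⟩ := Option.ite_none_right_eq_some.1 h; cases h2; rfl)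

variable (K : Type*) [Field K] (m : ℕ)

/-- Underlying space of the left regular representation model. -/
abbrev V := PB m → K

/-- Left multiplication by the generator `g` in the model. -/
noncomputable def rho (g : KSGen m) : Module.End K (V K m) where
  toFun f := fun b => ((pre g b).map f).getD 0
  map_add' f₁ f₂ := by funext b; cases h : pre g b <;> simp [h]
  map_smul' c f := by funext b; cases h : pre g b <;> simp [h]

lemma rho_apply (g : KSGen m) (f : V K m) (b : PB m) :
    rho K m g f b = ((pre g b).map f).getD 0 := rfl

end KSP
namespace KSP
variable (K : Type*) [Field K] (m : ℕ)
open KS FreeAlgebra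

lemma getD_ite {α : Type*} (c : Prop) [Decidable c] (a z : α) :
    ((if c then some a else none).getD z) = if c then a else z := by split <;> rfl

lemma map_ite {α β : Type*} (g : α → β) (c : Prop) [Decidable c] (a : α) :
    Option.map g (if c then some a else none) = if c then some (g a) else none := by
  split <;> rfl

/-- The model representation on the free algebra. -/
noncomputable def Phi : FreeAlgebra K (KSGen m) →ₐ[K] Module.End K (V K m) :=
  FreeAlgebra.lift K (rho K m)

set_option maxHeartbeats 1000000 in
lemma Phi_rel : ∀ ⦃x y⦄, Rel K m x y → Phi K m x = Phi K m y := by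
  intro x y h
  induction h with
  | e_mul i j =>
      ext f b
      by_cases hij : i = j <;>
        simp only [ne_eq, Fin.ext_iff] at hij <;>
        simp [hij, Phi, rho_apply, pre, map_ite, getD_ite, Fin.ext_iff] <;>
        first
          | (intros; exfalso; omega)
          | (split <;> simp_all [Fin.ext_iff] <;> omega)
  | one =>
      ext f b
      simp [Phi, rho_apply, pre, getD_ite, Finset.sum_ite_eq]
  | du i j hij =>
      ext f b
      cases b <;>
        simp [Phi, rho_apply, pre, tgt, map_ite, getD_ite, Fin.ext_iff] <;>
        first
          | (intros; exfalso; omega)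
          | omega
          | (split <;> split <;>
              first
                | (exfalso; omega)
                | (congr 2 <;> first | (apply Fin.ext; simp; omega) | omega)
                | simp_all [Fin.ext_iff]
                | omega)
  | _ =>
      first
      | (rename_i i
         ext f b
         cases b <;>
           simp [Phi, rho_apply, pre, tgt, map_ite, getD_ite, Fin.ext_iff] <;>
           first
             | rfl
             | (intros; exfalso; omega)
             | omega
             | (split <;> simp_all [Fin.ext_iff] <;> omega))
      | (rename_i i j hij
         first | simp only [ne_eq, Fin.ext_iff, Fin.coe_castSucc, Fin.val_succ] at hij | skip
         ext f b
         cases b <;>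
           simp [Phi, rho_apply, pre, tgt, map_ite, getD_ite, Fin.ext_iff] <;>
           first
             | rfl
             | (intros; exfalso; omega)
             | omega
             | (split <;> simp_all [Fin.ext_iff] <;> omega)
             | (split <;> split <;> simp_all [Fin.ext_iff] <;> omega))

/-- The model representation of `Q_m`. -/
noncomputable def Psi : Qm K m →ₐ[K] Module.End K (V K m) :=
  RingQuot.liftAlgHom K ⟨Phi K m, Phi_rel K m⟩

lemma Psi_eQ (i : Fin (m + 1)) : Psi K m (eQ K m i) = rho K m (.e i) := by
  simp [Psi, eQ, RingQuot.liftAlgHom_mkAlgHom_apply, Phi, FreeAlgebra.lift_ι_apply]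

lemma Psi_uQ (i : Fin m) : Psi K m (uQ K m i) = rho K m (.u i) := by
  simp [Psi, uQ, RingQuot.liftAlgHom_mkAlgHom_apply, Phi, FreeAlgebra.lift_ι_apply]

lemma Psi_dQ (i : Fin m) : Psi K m (dQ K m i) = rho K m (.d i) := by
  simp [Psi, dQ, RingQuot.liftAlgHom_mkAlgHom_apply, Phi, FreeAlgebra.lift_ι_apply]

end KSP
namespace KSP
variable (K : Type*) [Field K] (m : ℕ)
open KS FreeAlgebra

section Products
variable {K m}

local notation "mk" => RingQuot.mkAlgHom K (Rel K m)

variable [Field K]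

lemma eQ_mul_eQ (i j : Fin (m + 1)) :
    eQ K m i * eQ K m j = if i = j then eQ K m i else 0 := by
  have h := RingQuot.mkAlgHom_rel K (Rel.e_mul (K := K) (m := m) i j)
  simp only [map_mul, map_ite, map_zero, apply_ite mk] at h
  simpa [eQ, apply_ite mk] using h

lemma sum_eQ : ∑ i : Fin (m + 1), eQ K m i = 1 := by
  have h := RingQuot.mkAlgHom_rel K (Rel.one (K := K) (m := m))
  simpa [eQ, map_sum] using h

lemma uQ_mul_eQ (i : Fin m) (j : Fin (m + 1)) :
    uQ K m i * eQ K m j = if j = i.castSucc then uQ K m i else 0 := by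
  rcases eq_or_ne j i.castSucc with rfl | h
  · simpa [uQ, eQ] using RingQuot.mkAlgHom_rel K (Rel.u_src (K := K) (m := m) i)
  · simpa [uQ, eQ, h] using RingQuot.mkAlgHom_rel K (Rel.u_src' (K := K) (m := m) i j h)

lemma eQ_mul_uQ (j : Fin (m + 1)) (i : Fin m) :
    eQ K m j * uQ K m i = if j = i.succ then uQ K m i else 0 := by
  rcases eq_or_ne j i.succ with rfl | h
  · simpa [uQ, eQ] using RingQuot.mkAlgHom_rel K (Rel.u_tgt (K := K) (m := m) i)
  · simpa [uQ, eQ, h] using RingQuot.mkAlgHom_rel K (Rel.u_tgt' (K := K) (m := m) i j h)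

lemma dQ_mul_eQ (i : Fin m) (j : Fin (m + 1)) :
    dQ K m i * eQ K m j = if j = i.succ then dQ K m i else 0 := by
  rcases eq_or_ne j i.succ with rfl | h
  · simpa [dQ, eQ] using RingQuot.mkAlgHom_rel K (Rel.d_src (K := K) (m := m) i)
  · simpa [dQ, eQ, h] using RingQuot.mkAlgHom_rel K (Rel.d_src' (K := K) (m := m) i j h)

lemma eQ_mul_dQ (j : Fin (m + 1)) (i : Fin m) :
    eQ K m j * dQ K m i = if j = i.castSucc then dQ K m i else 0 := by
  rcases eq_or_ne j i.castSucc with rfl | h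
  · simpa [dQ, eQ] using RingQuot.mkAlgHom_rel K (Rel.d_tgt (K := K) (m := m) i)
  · simpa [dQ, eQ, h] using RingQuot.mkAlgHom_rel K (Rel.d_tgt' (K := K) (m := m) i j h)

lemma uQ_mul_uQ (i j : Fin m) : uQ K m i * uQ K m j = 0 := by
  rcases eq_or_ne (i : ℕ) ((j : ℕ) + 1) with h | h
  · simpa [uQ] using RingQuot.mkAlgHom_rel K (Rel.uu (K := K) (m := m) i j h)
  · have h2 : uQ K m j = eQ K m j.succ * uQ K m j := by simp [eQ_mul_uQ]
    rw [h2, ← mul_assoc, uQ_mul_eQ, if_neg, zero_mul]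
    intro hc
    rw [Fin.ext_iff] at hc
    simp at hc; omega

lemma dQ_mul_dQ (i j : Fin m) : dQ K m i * dQ K m j = 0 := by
  rcases eq_or_ne (j : ℕ) ((i : ℕ) + 1) with h | h
  · simpa [dQ] using RingQuot.mkAlgHom_rel K (Rel.dd (K := K) (m := m) j i h)
  · have h2 : dQ K m j = eQ K m j.castSucc * dQ K m j := by simp [eQ_mul_dQ]
    rw [h2, ← mul_assoc, dQ_mul_eQ, if_neg, zero_mul]
    intro hc
    rw [Fin.ext_iff] at hc
    simp at hc; omega

lemma uQ_mul_dQ (i j : Fin m) :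
    uQ K m i * dQ K m j = if j = i then epsQ K m i else 0 := by
  rcases eq_or_ne j i with rfl | h
  · simp [epsQ]
  · have h2 : dQ K m j = eQ K m j.castSucc * dQ K m j := by simp [eQ_mul_dQ]
    rw [h2, ← mul_assoc, uQ_mul_eQ, if_neg, zero_mul, if_neg h]
    intro hc
    exact h (Fin.castSucc_injective _ hc)

lemma dQ_mul_uQ_ne (i j : Fin m) (h : i ≠ j) : dQ K m i * uQ K m j = 0 := by
  have h2 : uQ K m j = eQ K m j.succ * uQ K m j := by simp [eQ_mul_uQ]
  rw [h2, ← mul_assoc, dQ_mul_eQ, if_neg, zero_mul]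
  intro hc
  exact h (Fin.succ_injective _ hc).symm

lemma dQ_mul_uQ_succ (i j : Fin m) (h : (i : ℕ) = (j : ℕ) + 1) :
    dQ K m i * uQ K m i = epsQ K m j := by
  simpa [dQ, uQ, epsQ, map_mul] using RingQuot.mkAlgHom_rel K (Rel.du (K := K) (m := m) i j h)

lemma dQ_mul_uQ_zero (i : Fin m) (h : (i : ℕ) = 0) : dQ K m i * uQ K m i = 0 := by
  simpa [dQ, uQ, map_mul] using RingQuot.mkAlgHom_rel K (Rel.deadend (K := K) (m := m) i h)

lemma eQ_mul_epsQ (j : Fin (m + 1)) (i : Fin m) :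
    eQ K m j * epsQ K m i = if j = i.succ then epsQ K m i else 0 := by
  rw [epsQ, ← mul_assoc, eQ_mul_uQ]
  split <;> simp [epsQ]

lemma epsQ_mul_eQ (i : Fin m) (j : Fin (m + 1)) :
    epsQ K m i * eQ K m j = if j = i.succ then epsQ K m i else 0 := by
  rw [epsQ, mul_assoc, dQ_mul_eQ]
  split <;> simp [epsQ]

lemma epsQ_mul_uQ (i j : Fin m) : epsQ K m i * uQ K m j = 0 := by
  rcases eq_or_ne i j with rfl | h
  · rcases Nat.eq_zero_or_pos (i : ℕ) with h0 | h0
    · rw [epsQ, mul_assoc, dQ_mul_uQ_zero i h0, mul_zero]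
    · have hlt : (i : ℕ) - 1 < m := by have := i.2; omega
      rw [epsQ, mul_assoc, dQ_mul_uQ_succ i ⟨(i : ℕ) - 1, hlt⟩ (by simp; omega), epsQ,
        ← mul_assoc, uQ_mul_uQ, zero_mul]
  · rw [epsQ, mul_assoc, dQ_mul_uQ_ne i j h, mul_zero]

lemma dQ_mul_epsQ (j i : Fin m) : dQ K m j * epsQ K m i = 0 := by
  rcases eq_or_ne j i with rfl | h
  · rcases Nat.eq_zero_or_pos (j : ℕ) with h0 | h0
    · rw [epsQ, ← mul_assoc, dQ_mul_uQ_zero j h0, zero_mul]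
    · have hlt : (j : ℕ) - 1 < m := by have := j.2; omega
      rw [epsQ, ← mul_assoc, dQ_mul_uQ_succ j ⟨(j : ℕ) - 1, hlt⟩ (by simp; omega), epsQ,
        mul_assoc, dQ_mul_dQ, mul_zero]
  · rw [epsQ, ← mul_assoc, dQ_mul_uQ_ne j i h, zero_mul]

lemma uQ_mul_epsQ (j i : Fin m) : uQ K m j * epsQ K m i = 0 := by
  rw [epsQ, ← mul_assoc, uQ_mul_uQ, zero_mul]

lemma epsQ_mul_dQ (i j : Fin m) : epsQ K m i * dQ K m j = 0 := by
  rw [epsQ, mul_assoc, dQ_mul_dQ, mul_zero]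

lemma epsQ_mul_epsQ (i j : Fin m) : epsQ K m i * epsQ K m j = 0 := by
  rw [epsQ, mul_assoc, dQ_mul_epsQ, mul_zero]

end Products
end KSP
namespace KSP
variable (K : Type*) [Field K] (m : ℕ)
open KS FreeAlgebra

/-- The canonical basis elements of `Q_m`. -/
noncomputable def bas : PB m → Qm K m
  | .e i => eQ K m i
  | .u i => uQ K m i
  | .d i => dQ K m i
  | .eps i => epsQ K m i

/-- The span of the canonical basis. -/
noncomputable def W : Submodule K (Qm K m) := Submodule.span K (Set.range (bas K m))

lemma bas_mem_W (b : PB m) : bas K m b ∈ W K m :=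
  Submodule.subset_span ⟨b, rfl⟩

lemma eQ_mem_W (i : Fin (m + 1)) : eQ K m i ∈ W K m := bas_mem_W K m (.e i)
lemma uQ_mem_W (i : Fin m) : uQ K m i ∈ W K m := bas_mem_W K m (.u i)
lemma dQ_mem_W (i : Fin m) : dQ K m i ∈ W K m := bas_mem_W K m (.d i)
lemma epsQ_mem_W (i : Fin m) : epsQ K m i ∈ W K m := bas_mem_W K m (.eps i)

lemma one_mem_W : (1 : Qm K m) ∈ W K m := by
  rw [← sum_eQ]
  exact Submodule.sum_mem _ fun i _ => bas_mem_W K m (.e i)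

lemma bas_mul_bas (b b' : PB m) : bas K m b * bas K m b' ∈ W K m := by
  cases b <;> cases b' <;>
    simp only [bas, eQ_mul_eQ, uQ_mul_eQ, eQ_mul_uQ, dQ_mul_eQ, eQ_mul_dQ,
      eQ_mul_epsQ, epsQ_mul_eQ, uQ_mul_uQ, dQ_mul_dQ, uQ_mul_dQ,
      epsQ_mul_uQ, dQ_mul_epsQ, uQ_mul_epsQ, epsQ_mul_dQ, epsQ_mul_epsQ] <;>
    first
      | exact Submodule.zero_mem _
      | (split <;> first
          | exact Submodule.zero_mem _
          | exact eQ_mem_W K m _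
          | exact uQ_mem_W K m _
          | exact dQ_mem_W K m _
          | exact epsQ_mem_W K m _)
      | (rename_i i j
         rcases eq_or_ne i j with rfl | h
         · rcases Nat.eq_zero_or_pos (i : ℕ) with h0 | h0
           · rw [dQ_mul_uQ_zero i h0]; exact Submodule.zero_mem _
           · have hlt : (i : ℕ) - 1 < m := by have := i.2; omega
             rw [dQ_mul_uQ_succ i ⟨(i : ℕ) - 1, hlt⟩ (by simp; omega)]
             exact epsQ_mem_W K m _
         · rw [dQ_mul_uQ_ne i j h]; exact Submodule.zero_mem _)

lemma mul_mem_W {x y : Qm K m} (hx : x ∈ W K m) (hy : y ∈ W K m) :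
    x * y ∈ W K m := by
  induction hx using Submodule.span_induction with
  | mem x hx =>
      obtain ⟨b, rfl⟩ := hx
      induction hy using Submodule.span_induction with
      | mem y hy => obtain ⟨b', rfl⟩ := hy; exact bas_mul_bas K m b b'
      | zero => simpa using Submodule.zero_mem _
      | add y z _ _ h1 h2 => rw [mul_add]; exact Submodule.add_mem _ h1 h2
      | smul c y _ h1 => rw [mul_smul_comm]; exact Submodule.smul_mem _ _ h1
  | zero => simpa using Submodule.zero_mem _
  | add x z _ _ h1 h2 => rw [add_mul]; exact Submodule.add_mem _ h1 h2
  | smul c x _ h1 => rw [smul_mul_assoc]; exact Submodule.smul_mem _ _ h1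

lemma mem_W (q : Qm K m) : q ∈ W K m := by
  obtain ⟨x, rfl⟩ := RingQuot.mkAlgHom_surjective K (Rel K m) q
  induction x using FreeAlgebra.induction with
  | grade0 r =>
      rw [AlgHom.commutes, Algebra.algebraMap_eq_smul_one]
      exact Submodule.smul_mem _ _ (one_mem_W K m)
  | grade1 g =>
      cases g with
      | e i => exact bas_mem_W K m (.e i)
      | u i => exact bas_mem_W K m (.u i)
      | d i => exact bas_mem_W K m (.d i)
  | mul a b ha hb => rw [map_mul]; exact mul_mem_W K m ha hb
  | add a b ha hb => rw [map_add]; exact Submodule.add_mem _ ha hb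

/-- Elements of `e_{i'} Q_m e_i` lie in the span of sandwiched basis elements. -/
lemma homSpace_le_span (i' i : Fin (m + 1)) :
    homSpace K m i' i ≤
      Submodule.span K (Set.range fun b : PB m => eQ K m i' * bas K m b * eQ K m i) := by
  rintro q ⟨y, rfl⟩
  have hy := mem_W K m y
  simp only [LinearMap.coe_comp, Function.comp_apply, LinearMap.mulRight_apply,
    LinearMap.mulLeft_apply, ← mul_assoc]
  induction hy using Submodule.span_induction with
  | mem y hy => obtain ⟨b, rfl⟩ := hy; exact Submodule.subset_span ⟨b, rfl⟩
  | zero => simpa using Submodule.zero_mem _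
  | add y z _ _ h1 h2 => rw [mul_add, add_mul]; exact Submodule.add_mem _ h1 h2
  | smul c y _ h1 =>
      rw [mul_smul_comm, smul_mul_assoc]; exact Submodule.smul_mem _ _ h1

end KSP
namespace KSP
variable (K : Type*) [Field K] (m : ℕ)
open KS FreeAlgebra

section Spans
variable {K m} [Field K]

/-- membership of generators in homSpaces -/
lemma mem_homSpace_of (i' i : Fin (m + 1)) (q : Qm K m)
    (h : eQ K m i' * (q * eQ K m i) = q) : q ∈ homSpace K m i' i :=
  ⟨q, by simpa [LinearMap.mulLeft_apply, LinearMap.mulRight_apply] using h⟩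

lemma eQ_mem_homSpace (i : Fin (m + 1)) : eQ K m i ∈ homSpace K m i i :=
  mem_homSpace_of i i _ (by simp [eQ_mul_eQ])

lemma epsQ_mem_homSpace (k : Fin m) : epsQ K m k ∈ homSpace K m k.succ k.succ :=
  mem_homSpace_of _ _ _ (by simp [epsQ_mul_eQ, eQ_mul_epsQ])

lemma uQ_mem_homSpace (k : Fin m) : uQ K m k ∈ homSpace K m k.succ k.castSucc :=
  mem_homSpace_of _ _ _ (by simp [uQ_mul_eQ, eQ_mul_uQ])

lemma dQ_mem_homSpace (k : Fin m) : dQ K m k ∈ homSpace K m k.castSucc k.succ :=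
  mem_homSpace_of _ _ _ (by simp [dQ_mul_eQ, eQ_mul_dQ])

/-- `e_i Q e_i ⊆ span {e_i, ε}` for `i = k+1`. -/
lemma homSpace_succ_succ_le (k : Fin m) :
    homSpace K m k.succ k.succ ≤
      Submodule.span K {eQ K m k.succ, epsQ K m k} := by
  refine le_trans (homSpace_le_span K m _ _) (Submodule.span_le.2 ?_)
  rintro x ⟨b, rfl⟩
  cases b <;>
    simp only [bas, eQ_mul_eQ, eQ_mul_uQ, uQ_mul_eQ, eQ_mul_dQ, dQ_mul_eQ,
      eQ_mul_epsQ, epsQ_mul_eQ, ite_mul, mul_ite, zero_mul, mul_zero] <;>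
    split_ifs <;>
    first
      | exact Submodule.zero_mem _
      | (apply Submodule.subset_span; simp only [Set.mem_insert_iff, Set.mem_singleton_iff, true_or]; done)
      | (exfalso; simp only [Fin.ext_iff, Fin.val_succ, Fin.val_castSucc] at *; omega)
      | (apply Submodule.subset_span
         simp only [Set.mem_insert_iff, Set.mem_singleton_iff]
         try simp_all only [Fin.ext_iff, Fin.val_succ, Fin.coe_castSucc]
         first
           | rfl
           | (left; rfl)
           | (right; rfl)
           | (left; congr 1 <;> first | trivial | (apply Fin.ext; simp only [Fin.val_succ, Fin.coe_castSucc]; omega) | (apply Fin.ext; omega))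
           | (right; congr 1 <;> first | trivial | (apply Fin.ext; simp only [Fin.val_succ, Fin.coe_castSucc]; omega) | (apply Fin.ext; omega))
           | (congr 1 <;> first | trivial | (apply Fin.ext; simp only [Fin.val_succ, Fin.coe_castSucc]; omega) | (apply Fin.ext; omega)))
      | (exfalso; omega)
      | (simp_all [Fin.ext_iff]; done)
      | (exfalso; simp_all [Fin.ext_iff] <;> omega)

/-- `e_{k+1} Q e_k ⊆ span {u_k}`. -/
lemma homSpace_succ_castSucc_le (k : Fin m) :
    homSpace K m k.succ k.castSucc ≤ Submodule.span K {uQ K m k} := by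
  refine le_trans (homSpace_le_span K m _ _) (Submodule.span_le.2 ?_)
  rintro x ⟨b, rfl⟩
  cases b <;>
    simp only [bas, eQ_mul_eQ, eQ_mul_uQ, uQ_mul_eQ, eQ_mul_dQ, dQ_mul_eQ,
      eQ_mul_epsQ, epsQ_mul_eQ, ite_mul, mul_ite, zero_mul, mul_zero] <;>
    split_ifs <;>
    first
      | exact Submodule.zero_mem _
      | (apply Submodule.subset_span
         simp only [Set.mem_insert_iff, Set.mem_singleton_iff]
         try simp_all only [Fin.ext_iff, Fin.val_succ, Fin.coe_castSucc]
         first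
           | rfl
           | (left; rfl)
           | (right; rfl)
           | (left; congr 1 <;> first | trivial | (apply Fin.ext; simp only [Fin.val_succ, Fin.coe_castSucc]; omega) | (apply Fin.ext; omega))
           | (right; congr 1 <;> first | trivial | (apply Fin.ext; simp only [Fin.val_succ, Fin.coe_castSucc]; omega) | (apply Fin.ext; omega))
           | (congr 1 <;> first | trivial | (apply Fin.ext; simp only [Fin.val_succ, Fin.coe_castSucc]; omega) | (apply Fin.ext; omega)))
      | (exfalso; omega)
      | (simp_all [Fin.ext_iff]; done)
      | (exfalso; simp_all [Fin.ext_iff] <;> omega)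

/-- `e_k Q e_{k+1} ⊆ span {d_k}`. -/
lemma homSpace_castSucc_succ_le (k : Fin m) :
    homSpace K m k.castSucc k.succ ≤ Submodule.span K {dQ K m k} := by
  refine le_trans (homSpace_le_span K m _ _) (Submodule.span_le.2 ?_)
  rintro x ⟨b, rfl⟩
  cases b <;>
    simp only [bas, eQ_mul_eQ, eQ_mul_uQ, uQ_mul_eQ, eQ_mul_dQ, dQ_mul_eQ,
      eQ_mul_epsQ, epsQ_mul_eQ, ite_mul, mul_ite, zero_mul, mul_zero] <;>
    split_ifs <;>
    first
      | exact Submodule.zero_mem _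
      | (apply Submodule.subset_span
         simp only [Set.mem_insert_iff, Set.mem_singleton_iff]
         try simp_all only [Fin.ext_iff, Fin.val_succ, Fin.coe_castSucc]
         first
           | rfl
           | (left; rfl)
           | (right; rfl)
           | (left; congr 1 <;> first | trivial | (apply Fin.ext; simp only [Fin.val_succ, Fin.coe_castSucc]; omega) | (apply Fin.ext; omega))
           | (right; congr 1 <;> first | trivial | (apply Fin.ext; simp only [Fin.val_succ, Fin.coe_castSucc]; omega) | (apply Fin.ext; omega))
           | (congr 1 <;> first | trivial | (apply Fin.ext; simp only [Fin.val_succ, Fin.coe_castSucc]; omega) | (apply Fin.ext; omega)))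
      | (exfalso; omega)
      | (simp_all [Fin.ext_iff]; done)
      | (exfalso; simp_all [Fin.ext_iff] <;> omega)

/-- far apart: the hom space vanishes. -/
lemma homSpace_far (i' i : Fin (m + 1)) (h : 1 < ((i : ℤ) - (i' : ℤ)).natAbs) :
    ∀ q ∈ homSpace K m i' i, q = 0 := by
  intro q hq
  have h2 := homSpace_le_span K m i' i hq
  have h3 : (Set.range fun b : PB m => eQ K m i' * bas K m b * eQ K m i) ⊆ {0} := by
    rintro x ⟨b, rfl⟩
    cases b <;>
      simp only [bas, eQ_mul_eQ, eQ_mul_uQ, uQ_mul_eQ, eQ_mul_dQ, dQ_mul_eQ,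
        eQ_mul_epsQ, epsQ_mul_eQ, ite_mul, mul_ite, zero_mul, mul_zero] <;>
      split_ifs <;>
      first
        | rfl
        | simp_all
        | (exfalso; simp_all [Fin.ext_iff] <;> omega)
  have h4 : q ∈ Submodule.span K ({0} : Set (Qm K m)) := Submodule.span_mono h3 h2
  simpa using h4

/-- grade memberships -/
lemma eQ_mem_grade (i : Fin (m + 1)) : eQ K m i ∈ grade K m 0 :=
  Submodule.subset_span ⟨i, [], by simp⟩

lemma uQ_mem_grade (k : Fin m) : uQ K m k ∈ grade K m 1 :=
  Submodule.subset_span ⟨k.succ, [uQ K m k],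
    by simp [IsArrow, eQ_mul_uQ]⟩

lemma dQ_mem_grade (k : Fin m) : dQ K m k ∈ grade K m 1 :=
  Submodule.subset_span ⟨k.castSucc, [dQ K m k],
    by simp [IsArrow, eQ_mul_dQ]⟩

lemma epsQ_mem_grade (k : Fin m) : epsQ K m k ∈ grade K m 2 :=
  Submodule.subset_span ⟨k.succ, [uQ K m k, dQ K m k], by
    refine ⟨?_, rfl, ?_⟩
    · intro a ha
      simp only [List.mem_cons, List.not_mem_nil, or_false] at ha
      rcases ha with rfl | rfl
      · exact Or.inl ⟨k, rfl⟩
      · exact Or.inr ⟨k, rfl⟩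
    · simp [epsQ, ← mul_assoc, eQ_mul_uQ]⟩

end Spans
end KSP
namespace KSP
variable (K : Type*) [Field K] (m : ℕ)
open KS

/-- delta function at the idempotent basis vector `e j`. -/
noncomputable def delta (j : Fin (m + 1)) : V K m :=
  fun b => if b = .e j then 1 else 0

/-- coefficient functional: coefficient of the basis path `b` in `q · e_j`. -/
noncomputable def coeff (j : Fin (m + 1)) (b : PB m) : Qm K m →ₗ[K] K where
  toFun q := Psi K m q (delta K m j) b
  map_add' x y := by simp [map_add]
  map_smul' c x := by simp [map_smul]

lemma coeff_apply (j : Fin (m + 1)) (b : PB m) (q : Qm K m) :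
    coeff K m j b q = Psi K m q (delta K m j) b := rfl

section Supp
variable {K m} [Field K]

lemma arrow_supp {a : Qm K m} (ha : IsArrow K m a) {f : V K m} {k : ℕ}
    (hf : ∀ b, deg b ≠ k → f b = 0) :
    ∀ b, deg b ≠ k + 1 → Psi K m a f b = 0 := by
  have key : ∀ g : KSGen m, (∀ b b', pre g b = some b' → deg b = deg b' + 1) →
      ∀ b : PB m, deg b ≠ k + 1 → rho K m g f b = 0 := by
    intro g hg b hb
    rw [rho_apply]
    cases hp : pre g b with
    | none => rfl
    | some b' =>
        simp only [hp, Option.map_some, Option.getD_some]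
        exact hf b' (by have := hg b b' hp; omega)
  rcases ha with ⟨i, rfl⟩ | ⟨i, rfl⟩
  · rw [Psi_uQ]; exact key (.u i) (fun b b' hp => pre_deg (.u i) b b' hp)
  · rw [Psi_dQ]; exact key (.d i) (fun b b' hp => pre_deg (.d i) b b' hp)

lemma list_supp (L : List (Qm K m)) (hL : ∀ a ∈ L, IsArrow K m a) {f : V K m} {k : ℕ}
    (hf : ∀ b, deg b ≠ k → f b = 0) :
    ∀ b, deg b ≠ k + L.length → Psi K m (L.prod) f b = 0 := by
  induction L with
  | nil => simpa using hf
  | cons a L ih =>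
      intro b hb
      rw [List.prod_cons, map_mul, Module.End.mul_apply]
      have h1 : ∀ b, deg b ≠ k + L.length → Psi K m L.prod f b = 0 :=
        ih (fun x hx => hL x (List.mem_cons_of_mem a hx))
      have := arrow_supp (hL a List.mem_cons_self) h1
      exact this b (by simp at hb ⊢; omega)

lemma grade_supp {n : ℕ} {q : Qm K m} (hq : q ∈ grade K m n) (j : Fin (m + 1))
    (b : PB m) (hb : deg b ≠ n) : Psi K m q (delta K m j) b = 0 := by
  induction hq using Submodule.span_induction with
  | mem x hx =>
      obtain ⟨i, L, hL, hlen, rfl⟩ := hx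
      have hdelta : ∀ b : PB m, deg b ≠ 0 → delta K m j b = 0 := by
        intro b hb
        cases b <;> simp_all [delta, deg]
      have hprod := list_supp L hL hdelta
      rw [map_mul, Module.End.mul_apply, Psi_eQ, rho_apply]
      cases hp : pre (.e i) b with
      | none => rfl
      | some b' =>
          have hd := pre_deg (.e i) b b' hp
          simp only [hp, Option.map_some, Option.getD_some]
          have hb' : b' = b := by
            simp only [pre] at hp
            split at hp
            · exact (Option.some_injective _ hp).symm
            · exact absurd hp (by simp)
          subst hb'
          exact hprod b' (by omega)
  | zero => simp
  | add x y _ _ h1 h2 => rw [map_add]; simp_all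
  | smul c x _ h1 => rw [map_smul]; simp_all

end Supp
end KSP
namespace KSP
variable {K : Type*} [Field K] {m : ℕ}
open KS

section CoeffValues
variable (K m) [Field K]

lemma coeff_e_eQ (k : Fin m) : coeff K m k.succ (.e k.succ) (eQ K m k.succ) = 1 := by
  simp [coeff_apply, Psi_eQ, rho_apply, pre, tgt, delta]

lemma coeff_e_epsQ (k : Fin m) : coeff K m k.succ (.e k.succ) (epsQ K m k) = 0 := by
  simp [coeff_apply, epsQ, map_mul, Module.End.mul_apply, Psi_uQ, Psi_dQ,
    rho_apply, pre, tgt, delta]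

lemma coeff_eps_eQ (k : Fin m) : coeff K m k.succ (.eps k) (eQ K m k.succ) = 0 := by
  simp [coeff_apply, Psi_eQ, rho_apply, pre, tgt, delta]

lemma coeff_eps_epsQ (k : Fin m) : coeff K m k.succ (.eps k) (epsQ K m k) = 1 := by
  simp [coeff_apply, epsQ, map_mul, Module.End.mul_apply, Psi_uQ, Psi_dQ,
    rho_apply, pre, tgt, delta]

lemma coeff_u_uQ (k : Fin m) : coeff K m k.castSucc (.u k) (uQ K m k) = 1 := by
  simp [coeff_apply, Psi_uQ, rho_apply, pre, tgt, delta]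

lemma coeff_d_dQ (k : Fin m) : coeff K m k.succ (.d k) (dQ K m k) = 1 := by
  simp [coeff_apply, Psi_dQ, rho_apply, pre, tgt, delta]

/-- coefficients vanish off their degree -/
lemma coeff_grade_zero {n : ℕ} {q : Qm K m} (hq : q ∈ grade K m n) (j : Fin (m + 1))
    (b : PB m) (hb : deg b ≠ n) : coeff K m j b q = 0 :=
  grade_supp hq j b hb

end CoeffValues

section DimEquiv
variable (K) [Field K]

/-- A generic rank-1 submodule equivalence. -/
noncomputable def dim1Equiv (N : Submodule K (Qm K m)) (g : Qm K m) (hg : g ∈ N)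
    (c : Qm K m →ₗ[K] K) (hspan : N ≤ Submodule.span K {g}) (hc : c g = 1) :
    N ≃ₗ[K] K where
  toFun h := c h
  map_add' x y := by simp
  map_smul' r x := by simp
  invFun a := ⟨a • g, N.smul_mem a hg⟩
  left_inv h := by
    obtain ⟨α, hα⟩ := Submodule.mem_span_singleton.1 (hspan h.2)
    have hch : c h = α := by rw [← hα]; simp [hc]
    apply Subtype.ext
    simp [hch, hα]
  right_inv a := by simp [hc]

@[simp] lemma dim1Equiv_apply (N : Submodule K (Qm K m)) (g : Qm K m) (hg : g ∈ N)
    (c : Qm K m →ₗ[K] K) (hspan : N ≤ Submodule.span K {g}) (hc : c g = 1) (h : N) :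
    dim1Equiv K N g hg c hspan hc h = c h := rfl

@[simp] lemma dim1Equiv_symm_apply (N : Submodule K (Qm K m)) (g : Qm K m) (hg : g ∈ N)
    (c : Qm K m →ₗ[K] K) (hspan : N ≤ Submodule.span K {g}) (hc : c g = 1) (a : K) :
    ((dim1Equiv K N g hg c hspan hc).symm a : Qm K m) = a • g := rfl

/-- A generic rank-2 submodule equivalence. -/
noncomputable def dim2Equiv (N : Submodule K (Qm K m)) (g0 g1 : Qm K m)
    (hg0 : g0 ∈ N) (hg1 : g1 ∈ N) (c0 c1 : Qm K m →ₗ[K] K)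
    (hspan : N ≤ Submodule.span K {g0, g1})
    (h00 : c0 g0 = 1) (h01 : c0 g1 = 0) (h10 : c1 g0 = 0) (h11 : c1 g1 = 1) :
    N ≃ₗ[K] K × K where
  toFun h := (c0 h, c1 h)
  map_add' x y := by simp [Prod.ext_iff]
  map_smul' r x := by simp [Prod.ext_iff]
  invFun p := ⟨p.1 • g0 + p.2 • g1, N.add_mem (N.smul_mem _ hg0) (N.smul_mem _ hg1)⟩
  left_inv h := by
    obtain ⟨α, β, hα⟩ := Submodule.mem_span_pair.1 (hspan h.2)
    have hc0 : c0 h = α := by rw [← hα]; simp [h00, h01]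
    have hc1 : c1 h = β := by rw [← hα]; simp [h10, h11]
    apply Subtype.ext
    simp [hc0, hc1, hα]
  right_inv p := by simp [h00, h01, h10, h11, Prod.ext_iff]

@[simp] lemma dim2Equiv_apply (N : Submodule K (Qm K m)) (g0 g1 : Qm K m)
    (hg0 : g0 ∈ N) (hg1 : g1 ∈ N) (c0 c1 : Qm K m →ₗ[K] K)
    (hspan : N ≤ Submodule.span K {g0, g1})
    (h00 : c0 g0 = 1) (h01 : c0 g1 = 0) (h10 : c1 g0 = 0) (h11 : c1 g1 = 1) (h : N) :
    dim2Equiv K N g0 g1 hg0 hg1 c0 c1 hspan h00 h01 h10 h11 h = (c0 h, c1 h) := rfl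

end DimEquiv
end KSP
namespace KSP
open TensorProduct

section TensorIso
variable {K P X N N1 N2 : Type*} [Field K]
  [AddCommMonoid P] [AddCommMonoid X] [AddCommMonoid N] [AddCommMonoid N1] [AddCommMonoid N2]
  [Module K P] [Module K X] [Module K N] [Module K N1] [Module K N2]

/-- Contract a 1-dimensional middle factor. -/
noncomputable def iso1 (φ : N ≃ₗ[K] K) : P ⊗[K] (N ⊗[K] X) ≃ₗ[K] P ⊗[K] X :=
  LinearEquiv.lTensor P ((LinearEquiv.rTensor X φ).trans (TensorProduct.lid K X))

@[simp] lemma iso1_tmul (φ : N ≃ₗ[K] K) (p : P) (h : N) (x : X) :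
    iso1 (P := P) φ (p ⊗ₜ (h ⊗ₜ x)) = φ h • (p ⊗ₜ x) := by
  simp [iso1, smul_tmul]

/-- Split a 2-dimensional middle factor. -/
noncomputable def iso2 (φ : N ≃ₗ[K] K × K) :
    P ⊗[K] (N ⊗[K] X) ≃ₗ[K] (P ⊗[K] X) × (P ⊗[K] X) :=
  (LinearEquiv.lTensor P ((LinearEquiv.rTensor X φ).trans
    ((TensorProduct.prodLeft K K K K X).trans
      (LinearEquiv.prodCongr (TensorProduct.lid K X) (TensorProduct.lid K X))))).trans
    (TensorProduct.prodRight K K P X X)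

@[simp] lemma iso2_tmul (φ : N ≃ₗ[K] K × K) (p : P) (h : N) (x : X) :
    iso2 (P := P) φ (p ⊗ₜ (h ⊗ₜ x)) =
      ((φ h).1 • (p ⊗ₜ x), (φ h).2 • (p ⊗ₜ x)) := by
  obtain ⟨a, b, hab⟩ : ∃ a b, φ h = (a, b) := ⟨_, _, rfl⟩
  simp [iso2, hab, tmul_smul, smul_tmul]

/-- Contract two 1-dimensional middle factors. -/
noncomputable def iso3 (φ1 : N1 ≃ₗ[K] K) (φ2 : N2 ≃ₗ[K] K) :
    P ⊗[K] (N1 ⊗[K] (N2 ⊗[K] X)) ≃ₗ[K] P ⊗[K] X :=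
  (LinearEquiv.lTensor P (LinearEquiv.lTensor N1
    ((LinearEquiv.rTensor X φ2).trans (TensorProduct.lid K X)))).trans (iso1 φ1)

@[simp] lemma iso3_tmul (φ1 : N1 ≃ₗ[K] K) (φ2 : N2 ≃ₗ[K] K) (p : P) (h : N1)
    (h' : N2) (x : X) :
    iso3 (P := P) φ1 φ2 (p ⊗ₜ (h ⊗ₜ (h' ⊗ₜ x))) =
      (φ1 h * φ2 h') • (p ⊗ₜ x) := by
  simp [iso3, smul_tmul, tmul_smul, smul_smul, mul_comm]

/-- pointwise criterion on threefold tensors -/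
lemma eq_on_tensor3 {C : Type*} [AddCommMonoid C] [Module K C]
    (F G : P ⊗[K] (N ⊗[K] X) →ₗ[K] C)
    (h : ∀ p a x, F (p ⊗ₜ (a ⊗ₜ x)) = G (p ⊗ₜ (a ⊗ₜ x))) : F = G := by
  apply TensorProduct.ext'
  intro p y
  induction y using TensorProduct.induction_on with
  | zero => simp
  | tmul a x => exact h p a x
  | add y z hy hz => rw [tmul_add, map_add, map_add, hy, hz]

lemma eq_on_tensor4 {C : Type*} [AddCommMonoid C] [Module K C]
    (F G : P ⊗[K] (N1 ⊗[K] (N2 ⊗[K] X)) →ₗ[K] C)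
    (h : ∀ p a b x, F (p ⊗ₜ (a ⊗ₜ (b ⊗ₜ x))) = G (p ⊗ₜ (a ⊗ₜ (b ⊗ₜ x)))) : F = G := by
  apply TensorProduct.ext'
  intro p y
  induction y using TensorProduct.induction_on with
  | zero => simp
  | tmul a z =>
      induction z using TensorProduct.induction_on with
      | zero => simp [tmul_zero]
      | tmul b x => exact h p a b x
      | add z w hz hw =>
          rw [tmul_add, tmul_add, map_add, map_add, hz, hw]
  | add y z hy hz => rw [tmul_add, map_add, map_add, hy, hz]

lemma subsingleton_tensor_left (hN : ∀ n : N, n = 0) : ∀ z : N ⊗[K] X, z = 0 := by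
  intro z
  induction z using TensorProduct.induction_on with
  | zero => rfl
  | tmul n x => rw [hN n, zero_tmul]
  | add y z hy hz => rw [hy, hz, add_zero]

lemma subsingleton_tensor_right (hX : ∀ x : X, x = 0) : ∀ z : N ⊗[K] X, z = 0 := by
  intro z
  induction z using TensorProduct.induction_on with
  | zero => rfl
  | tmul n x => rw [hX x, tmul_zero]
  | add y z hy hz => rw [hy, hz, add_zero]

end TensorIso
end KSP
set_option maxHeartbeats 3200000 in
set_option synthInstance.maxHeartbeats 1000000 in
open KS TensorProduct in
/-- **Categorified Temperley–Lieb relations for the projective functors.**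
The functors `U_i = - ⊗_{Q_m} B_i` (with `B_i = P_i ⊗ ᵢP⟨-1⟩`) on graded
projective right `Q_m`-modules satisfy `U_i ∘ U_i ≅ U_i⟨-1⟩ ⊕ U_i⟨+1⟩`,
`U_i ∘ U_{i±1} ∘ U_i ≅ U_i` (when all indices lie in `{1, …, m}`), and
`U_i ∘ U_{i'} ≅ 0` for `|i - i'| > 1`.  Equivalently, on the level of the
representing bimodules (using `B_i ⊗_{Q_m} B_j ≅ Q_me_i ⊗ e_iQ_me_j ⊗ e_jQ_m`):
there are `K`-linear isomorphisms, equivariant for the left and right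
`Q_m`-actions and with the path-length degree shifts recorded below. -/
theorem Ui_temperley_lieb_relations (K : Type*) [Field K] (m : ℕ)
    (i : Fin (m + 1)) (hi0 : 0 < (i : ℕ)) :
    -- `U_i ∘ U_i ≅ U_i⟨-1⟩ ⊕ U_i⟨+1⟩`:
    (∃ ψ : B2space K m i i ≃ₗ[K] (Bspace K m i × Bspace K m i),
      (∀ (q : Qm K m) z, ψ (lB2 K m i i q z) =
        LinearMap.prodMap (lB K m i q) (lB K m i q) (ψ z)) ∧
      (∀ (q : Qm K m) z, ψ (rB2 K m i i q z) =
        LinearMap.prodMap (rB K m i q) (rB K m i q) (ψ z)) ∧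
      (∀ (a b c : ℕ) (p : leftIdeal K m i) (h : homSpace K m i i)
          (x : rightIdeal K m i),
        (p : Qm K m) ∈ grade K m a → (h : Qm K m) ∈ grade K m b →
        (x : Qm K m) ∈ grade K m c →
          (ψ (p ⊗ₜ[K] (h ⊗ₜ[K] x))).1 ∈ Bgrade K m i ((a : ℤ) + b + c) ∧
          (ψ (p ⊗ₜ[K] (h ⊗ₜ[K] x))).2 ∈ Bgrade K m i ((a : ℤ) + b + c - 2))) ∧
    -- `U_i ∘ U_{i±1} ∘ U_i ≅ U_i`:
    (∀ j : Fin (m + 1), 0 < (j : ℕ) → ((i : ℤ) - (j : ℤ)).natAbs = 1 →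
      ∃ ψ : B3space K m i j ≃ₗ[K] Bspace K m i,
      (∀ (q : Qm K m) z, ψ (lB3 K m i j q z) = lB K m i q (ψ z)) ∧
      (∀ (q : Qm K m) z, ψ (rB3 K m i j q z) = rB K m i q (ψ z)) ∧
      (∀ (a b c d : ℕ) (p : leftIdeal K m i) (h : homSpace K m i j)
          (h' : homSpace K m j i) (x : rightIdeal K m i),
        (p : Qm K m) ∈ grade K m a → (h : Qm K m) ∈ grade K m b →
        (h' : Qm K m) ∈ grade K m c → (x : Qm K m) ∈ grade K m d →
          ψ (p ⊗ₜ[K] (h ⊗ₜ[K] (h' ⊗ₜ[K] x))) ∈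
            Bgrade K m i ((a : ℤ) + b + c + d - 2))) ∧
    -- `U_i ∘ U_{i'} ≅ 0` for `|i - i'| > 1`:
    (∀ i' : Fin (m + 1), 1 < ((i : ℤ) - (i' : ℤ)).natAbs →
      Subsingleton (B2space K m i' i)) := by
  classical
  obtain ⟨k, rfl⟩ : ∃ k : Fin m, i = k.succ := by
    refine ⟨⟨(i : ℕ) - 1, by have := i.isLt; omega⟩, ?_⟩
    apply Fin.ext; simp [Fin.val_succ]; omega
  refine ⟨?_, ?_, ?_⟩
  · -- U_i ∘ U_i
    set c0 := KSP.coeff K m k.succ (.e k.succ) with hc0def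
    set c1 := KSP.coeff K m k.succ (.eps k) with hc1def
    set φ := KSP.dim2Equiv K (homSpace K m k.succ k.succ) (eQ K m k.succ) (epsQ K m k)
        (KSP.eQ_mem_homSpace _) (KSP.epsQ_mem_homSpace k) c0 c1
        (KSP.homSpace_succ_succ_le k) (KSP.coeff_e_eQ K m k) (KSP.coeff_e_epsQ K m k)
        (KSP.coeff_eps_eQ K m k) (KSP.coeff_eps_epsQ K m k) with hφdef
    refine ⟨KSP.iso2 φ, ?_, ?_, ?_⟩
    · intro q z
      have hm : (KSP.iso2 (P := leftIdeal K m k.succ) (X := rightIdeal K m k.succ)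
            φ).toLinearMap.comp (lB2 K m k.succ k.succ q)
          = (LinearMap.prodMap (lB K m k.succ q) (lB K m k.succ q)).comp
              (KSP.iso2 φ).toLinearMap := by
        apply KSP.eq_on_tensor3
        intro p a x
        simp [lB2, lB, LinearMap.rTensor_tmul]
      simpa using DFunLike.congr_fun hm z
    · intro q z
      have hm : (KSP.iso2 (P := leftIdeal K m k.succ) (X := rightIdeal K m k.succ)
            φ).toLinearMap.comp (rB2 K m k.succ k.succ q)
          = (LinearMap.prodMap (rB K m k.succ q) (rB K m k.succ q)).comp
              (KSP.iso2 φ).toLinearMap := by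
        apply KSP.eq_on_tensor3
        intro p a x
        simp [rB2, rB, LinearMap.lTensor_tmul]
      simpa using DFunLike.congr_fun hm z
    · intro a b c p h x hp hh hx
      constructor
      · simp only [KSP.iso2_tmul, hφdef, KSP.dim2Equiv_apply, hc0def, hc1def]
        rcases eq_or_ne b 0 with rfl | hb
        · exact Submodule.smul_mem _ _
            (Submodule.subset_span ⟨a, c, p, x, hp, hx, by push_cast; ring, rfl⟩)
        · rw [KSP.coeff_grade_zero K m hh _ _ (by simp [KSP.deg]; omega), zero_smul]
          exact Submodule.zero_mem _
      · simp only [KSP.iso2_tmul, hφdef, KSP.dim2Equiv_apply, hc0def, hc1def]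
        rcases eq_or_ne b 2 with rfl | hb
        · exact Submodule.smul_mem _ _
            (Submodule.subset_span ⟨a, c, p, x, hp, hx, by push_cast; ring, rfl⟩)
        · rw [KSP.coeff_grade_zero K m hh _ _ (by simp [KSP.deg]; omega), zero_smul]
          exact Submodule.zero_mem _
  · -- U_i ∘ U_{i±1} ∘ U_i
    intro j hj0 hdist
    have hji : (j : ℕ) = (k : ℕ) ∨ (j : ℕ) = (k : ℕ) + 2 := by
      simp only [Fin.val_succ] at hdist
      omega
    rcases hji with hc | hc
    · obtain rfl : j = k.castSucc := by apply Fin.ext; simpa using hc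
      set φa := KSP.dim1Equiv K (homSpace K m k.succ k.castSucc) (uQ K m k)
          (KSP.uQ_mem_homSpace k) (KSP.coeff K m k.castSucc (.u k))
          (KSP.homSpace_succ_castSucc_le k) (KSP.coeff_u_uQ K m k) with hφa
      set φb := KSP.dim1Equiv K (homSpace K m k.castSucc k.succ) (dQ K m k)
          (KSP.dQ_mem_homSpace k) (KSP.coeff K m k.succ (.d k))
          (KSP.homSpace_castSucc_succ_le k) (KSP.coeff_d_dQ K m k) with hφb
      refine ⟨KSP.iso3 φa φb, ?_, ?_, ?_⟩
      · intro q z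
        have hm : (KSP.iso3 (P := leftIdeal K m k.succ) (X := rightIdeal K m k.succ)
              φa φb).toLinearMap.comp (lB3 K m k.succ k.castSucc q)
            = (lB K m k.succ q).comp (KSP.iso3 φa φb).toLinearMap := by
          apply KSP.eq_on_tensor4
          intro p a b x
          simp [lB3, lB, LinearMap.rTensor_tmul]
        simpa using DFunLike.congr_fun hm z
      · intro q z
        have hm : (KSP.iso3 (P := leftIdeal K m k.succ) (X := rightIdeal K m k.succ)
              φa φb).toLinearMap.comp (rB3 K m k.succ k.castSucc q)
            = (rB K m k.succ q).comp (KSP.iso3 φa φb).toLinearMap := by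
          apply KSP.eq_on_tensor4
          intro p a b x
          simp [rB3, rB, LinearMap.lTensor_tmul]
        simpa using DFunLike.congr_fun hm z
      · intro a b c d p h h' x hp hh hh' hx
        simp only [KSP.iso3_tmul, hφa, hφb, KSP.dim1Equiv_apply]
        rcases eq_or_ne b 1 with rfl | hb
        · rcases eq_or_ne c 1 with rfl | hcc
          · exact Submodule.smul_mem _ _
              (Submodule.subset_span ⟨a, d, p, x, hp, hx, by push_cast; ring, rfl⟩)
          · rw [KSP.coeff_grade_zero K m hh' _ _ (by simp [KSP.deg]; omega), mul_zero,
              zero_smul]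
            exact Submodule.zero_mem _
        · rw [KSP.coeff_grade_zero K m hh _ _ (by simp [KSP.deg]; omega), zero_mul,
            zero_smul]
          exact Submodule.zero_mem _
    · have hk' : (k : ℕ) + 1 < m := by have := j.isLt; omega
      set k' : Fin m := ⟨(k : ℕ) + 1, hk'⟩ with hk'def
      obtain rfl : j = k'.succ := by apply Fin.ext; simp [hk'def]; omega
      have hik : k.succ = k'.castSucc := by apply Fin.ext; simp [hk'def]
      rw [hik]
      set φa := KSP.dim1Equiv K (homSpace K m k'.castSucc k'.succ) (dQ K m k')
          (KSP.dQ_mem_homSpace k') (KSP.coeff K m k'.succ (.d k'))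
          (KSP.homSpace_castSucc_succ_le k') (KSP.coeff_d_dQ K m k') with hφa
      set φb := KSP.dim1Equiv K (homSpace K m k'.succ k'.castSucc) (uQ K m k')
          (KSP.uQ_mem_homSpace k') (KSP.coeff K m k'.castSucc (.u k'))
          (KSP.homSpace_succ_castSucc_le k') (KSP.coeff_u_uQ K m k') with hφb
      refine ⟨KSP.iso3 φa φb, ?_, ?_, ?_⟩
      · intro q z
        have hm : (KSP.iso3 (P := leftIdeal K m k'.castSucc) (X := rightIdeal K m k'.castSucc)
              φa φb).toLinearMap.comp (lB3 K m k'.castSucc k'.succ q)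
            = (lB K m k'.castSucc q).comp (KSP.iso3 φa φb).toLinearMap := by
          apply KSP.eq_on_tensor4
          intro p a b x
          simp [lB3, lB, LinearMap.rTensor_tmul]
        simpa using DFunLike.congr_fun hm z
      · intro q z
        have hm : (KSP.iso3 (P := leftIdeal K m k'.castSucc) (X := rightIdeal K m k'.castSucc)
              φa φb).toLinearMap.comp (rB3 K m k'.castSucc k'.succ q)
            = (rB K m k'.castSucc q).comp (KSP.iso3 φa φb).toLinearMap := by
          apply KSP.eq_on_tensor4
          intro p a b x
          simp [rB3, rB, LinearMap.lTensor_tmul]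
        simpa using DFunLike.congr_fun hm z
      · intro a b c d p h h' x hp hh hh' hx
        simp only [KSP.iso3_tmul, hφa, hφb, KSP.dim1Equiv_apply]
        rcases eq_or_ne b 1 with rfl | hb
        · rcases eq_or_ne c 1 with rfl | hcc
          · exact Submodule.smul_mem _ _
              (Submodule.subset_span ⟨a, d, p, x, hp, hx, by push_cast; ring, rfl⟩)
          · rw [KSP.coeff_grade_zero K m hh' _ _ (by simp [KSP.deg]; omega), mul_zero,
              zero_smul]
            exact Submodule.zero_mem _
        · rw [KSP.coeff_grade_zero K m hh _ _ (by simp [KSP.deg]; omega), zero_mul,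
            zero_smul]
          exact Submodule.zero_mem _
  · -- far commutation
    intro i' hfar
    have hz : ∀ z : B2space K m i' k.succ, z = 0 := by
      intro z
      apply KSP.subsingleton_tensor_right
      · intro y
        apply KSP.subsingleton_tensor_left
        intro n
        exact Subtype.ext (KSP.homSpace_far i' k.succ hfar (n : Qm K m) n.2)
      -- note argument order
    exact ⟨fun z w => by rw [hz z, hz w]⟩
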